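/- Let g : ℝ → ℝ be C¹ with g(0) = 0, and suppose g'(s) ≥ −κ₁ + κ₂|s|^{q-1} for all s, where κ₁, κ₂ > 0 and q ≥ 3. Let G(s) = ∫₀ˢ g(τ) dτ. Then there exists δ'_q > 0 depending only on q and κ₂ such that for all v, z ∈ ℝ: G(v+z) − G(v) − g(v)z − (g(v+z) − g(v))z ≤ (κ₁/2)|z|² − δ'_q |z|² (|v|^{q-1} + |z|^{q-1}). -/

import Mathlib

open intervalIntegral MeasureTheory Set

lemma contF (v p : ℝ) (hp : (0:ℝ) ≤ p) : Continuous fun t : ℝ => |v + t| ^ p * t :=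
  ((continuous_abs.comp (continuous_const.add continuous_id)).rpow_const
    (fun _ => Or.inr hp)).mul continuous_id

lemma key_eq (p : ℝ) : (2:ℝ)^(-(4*p+5)) * 32 * 2^p * 2^(3*p) = 1 := by
  rw [show (32:ℝ) = 2^(5:ℝ) by norm_num [show (5:ℝ) = ((5:ℕ):ℝ) by norm_num, Real.rpow_natCast],
    ← Real.rpow_add two_pos, ← Real.rpow_add two_pos, ← Real.rpow_add two_pos,
    show -(4*p+5)+5+p+3*p = 0 by ring, Real.rpow_zero]

lemma core_pos (p : ℝ) (hp : 2 ≤ p) (v z : ℝ) (hz : 0 < z) :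
    (2:ℝ) ^ (-(4*p+5)) * z ^ 2 * (|v| ^ p + z ^ p) ≤ ∫ t in (0:ℝ)..z, |v + t| ^ p * t := by
  have hp0 : (0:ℝ) ≤ p := by linarith
  set c : ℝ := (2:ℝ) ^ (-(4*p+5)) with hc_def
  have hc : (0:ℝ) < c := Real.rpow_pos_of_pos two_pos _
  have hA : (1:ℝ) ≤ 2^p := Real.one_le_rpow one_le_two hp0
  have hB : (1:ℝ) ≤ 2^(3*p) := Real.one_le_rpow one_le_two (by linarith)
  have hkey := key_eq p
  have hInt : ∀ a b : ℝ, IntervalIntegrable (fun t => |v + t| ^ p * t) volume a b :=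
    fun a b => (contF v p hp0).intervalIntegrable a b
  have h8 : (8:ℝ)^p = (2:ℝ)^(3*p) := by
    rw [show (8:ℝ) = 2^(3:ℝ) by norm_num [show (3:ℝ) = ((3:ℕ):ℝ) by norm_num, Real.rpow_natCast],
      ← Real.rpow_mul (by norm_num)]
  rcases le_or_gt (2 * z) |v| with hcase | hcase
  · -- |v| ≥ 2z
    have hzv : z ≤ |v| := by linarith
    have step1 : ∫ t in (0:ℝ)..z, (|v|/2)^p * t ≤ ∫ t in (0:ℝ)..z, |v + t| ^ p * t := by
      refine integral_mono_on hz.le ?_ (hInt 0 z) ?_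
      · exact (continuous_const.mul continuous_id).intervalIntegrable 0 z
      · intro t ht
        have h1 : |v|/2 ≤ |v + t| := by
          have := abs_sub_abs_le_abs_sub (v + t) t
          rw [add_sub_cancel_right] at this
          have : |v| - |t| ≤ |v + t| := by
            have h2 := abs_add_le (v + t) (-t)
            simp only [add_neg_cancel_right, abs_neg] at h2
            linarith
          rw [abs_of_nonneg ht.1] at this
          linarith [ht.2]
        exact mul_le_mul_of_nonneg_right
          (Real.rpow_le_rpow (by positivity) h1 hp0) ht.1
    have step2 : ∫ t in (0:ℝ)..z, (|v|/2)^p * t = (|v|/2)^p * (z^2/2) := by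
      rw [intervalIntegral.integral_const_mul, integral_id]
      ring
    have hvp : (z:ℝ)^p ≤ |v|^p := Real.rpow_le_rpow hz.le hzv hp0
    have hdiv : (|v|/2)^p = |v|^p / 2^p := Real.div_rpow (abs_nonneg v) (by norm_num : (0:ℝ) ≤ 2) p
    have harith : c * z ^ 2 * (|v| ^ p + z ^ p) ≤ (|v|/2)^p * (z^2/2) := by
      rw [hdiv]
      have hzp2 : (0:ℝ) < z^2 := by positivity
      have hvp0 : (0:ℝ) ≤ |v|^p := Real.rpow_nonneg (abs_nonneg v) p
      have hA0 : (0:ℝ) < 2^p := by linarith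
      have h1 : c * (|v|^p + z^p) ≤ c * (2 * |v|^p) := by nlinarith
      have h3 : c * 4 * 2^p ≤ 1 := by
        nlinarith [mul_nonneg (mul_nonneg hc.le hA0.le) (by linarith : (0:ℝ) ≤ 32*2^(3*p) - 4)]
      have h2 : c * (2 * |v|^p) ≤ |v|^p / (2^p * 2) := by
        rw [le_div_iff₀ (by positivity)]
        calc c * (2 * |v|^p) * (2^p * 2) = (c * 4 * 2^p) * |v|^p := by ring
          _ ≤ 1 * |v|^p := mul_le_mul_of_nonneg_right h3 hvp0
          _ = |v|^p := one_mul _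
      calc c * z^2 * (|v|^p + z^p) = z^2 * (c * (|v|^p + z^p)) := by ring
        _ ≤ z^2 * (|v|^p / (2^p * 2)) := mul_le_mul_of_nonneg_left (h1.trans h2) hzp2.le
        _ = |v|^p / 2^p * (z^2/2) := by ring
    calc c * z ^ 2 * (|v| ^ p + z ^ p) ≤ (|v|/2)^p * (z^2/2) := harith
      _ = ∫ t in (0:ℝ)..z, (|v|/2)^p * t := step2.symm
      _ ≤ _ := step1
  · -- |v| < 2z
    obtain ⟨α, β, hα0, hαβ, hβz, hlen, hbnd⟩ :
        ∃ α β : ℝ, 0 ≤ α ∧ α ≤ β ∧ β ≤ z ∧ β - α = z/8 ∧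
          ∀ t ∈ Icc α β, z/8 ≤ |v + t| ∧ z/2 ≤ t := by
      rcases le_or_gt (-v) (3*z/4) with hm | hm
      · refine ⟨7*z/8, z, by linarith, by linarith, le_rfl, by ring, fun t ht => ⟨?_, by
          have := ht.1; linarith⟩⟩
        have h1 : z/8 ≤ v + t := by have := ht.1; linarith
        exact h1.trans (le_abs_self _)
      · refine ⟨z/2, 5*z/8, by linarith, by linarith, by linarith, by ring, fun t ht => ⟨?_, ht.1⟩⟩
        have h1 : z/8 ≤ -(v + t) := by have := ht.2; linarith
        exact h1.trans (neg_le_abs _)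
    have step1 : ∫ t in α..β, (z/8)^p * (z/2) ≤ ∫ t in α..β, |v + t| ^ p * t := by
      refine integral_mono_on hαβ (intervalIntegrable_const) (hInt α β) ?_
      intro t ht
      exact mul_le_mul (Real.rpow_le_rpow (by positivity) (hbnd t ht).1 hp0)
        (hbnd t ht).2 (by positivity) (Real.rpow_nonneg (abs_nonneg _) p)
    have step2 : ∫ t in α..β, ((z/8)^p * (z/2) : ℝ) = (z/8)^p * (z/2) * (z/8) := by
      rw [intervalIntegral.integral_const, hlen, smul_eq_mul]; ring
    have step3 : ∫ t in α..β, |v + t| ^ p * t ≤ ∫ t in (0:ℝ)..z, |v + t| ^ p * t := by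
      refine integral_mono_interval hα0 hαβ hβz ?_ (hInt 0 z)
      refine (ae_restrict_iff' measurableSet_Ioc).mpr (Filter.Eventually.of_forall ?_)
      intro t ht
      exact mul_nonneg (Real.rpow_nonneg (abs_nonneg _) p) ht.1.le
    have hdiv : (z/8)^p = z^p / 2^(3*p) := by
      rw [Real.div_rpow hz.le (by norm_num : (0:ℝ) ≤ 8) p, h8]
    have harith : c * z ^ 2 * (|v| ^ p + z ^ p) ≤ (z/8)^p * (z/2) * (z/8) := by
      rw [hdiv]
      have hzp : (0:ℝ) < z^p := Real.rpow_pos_of_pos hz p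
      have hzp2 : (0:ℝ) < z^2 := by positivity
      have hvp : |v|^p ≤ 2^p * z^p := by
        calc |v|^p ≤ (2*z)^p := Real.rpow_le_rpow (abs_nonneg v) hcase.le hp0
          _ = 2^p * z^p := Real.mul_rpow (by norm_num) hz.le
      have hB0 : (0:ℝ) < 2^(3*p) := by linarith
      have h16 : c * (2^p+1) * 2^(3*p) * 16 ≤ 1 := by
        nlinarith [mul_nonneg (mul_nonneg hc.le hB0.le) (by linarith : (0:ℝ) ≤ 2^p - 1)]
      have h6 : |v|^p + z^p ≤ (2^p+1) * z^p := by nlinarith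
      have h7 : c * z^2 * (|v|^p + z^p) ≤ c * z^2 * ((2^p+1) * z^p) := by
        nlinarith [mul_nonneg (mul_nonneg hc.le hzp2.le) (by linarith : (0:ℝ) ≤ (2^p+1)*z^p - (|v|^p + z^p))]
      have h9 : c * z^2 * ((2^p+1) * z^p) ≤ z^p / 2^(3*p) * (z/2) * (z/8) := by
        rw [div_mul_eq_mul_div, div_mul_eq_mul_div, le_div_iff₀ hB0]
        nlinarith [mul_le_mul_of_nonneg_right h16 (mul_nonneg hzp.le hzp2.le)]
      linarith
    calc c * z ^ 2 * (|v| ^ p + z ^ p) ≤ (z/8)^p * (z/2) * (z/8) := harith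
      _ = ∫ t in α..β, ((z/8)^p * (z/2) : ℝ) := step2.symm
      _ ≤ ∫ t in α..β, |v + t| ^ p * t := step1
      _ ≤ _ := step3

lemma core_all (p : ℝ) (hp : 2 ≤ p) (v z : ℝ) :
    (2:ℝ) ^ (-(4*p+5)) * z ^ 2 * (|v| ^ p + |z| ^ p) ≤ ∫ t in (0:ℝ)..z, |v + t| ^ p * t := by
  rcases lt_trichotomy z 0 with hz | rfl | hz
  · have h := core_pos p hp (-v) (-z) (by linarith)
    have h2 : ∫ t in (0:ℝ)..(-z), |(-v) + t| ^ p * t = ∫ t in (0:ℝ)..z, |v + t| ^ p * t := by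
      have h3 := intervalIntegral.integral_comp_neg (a := (0:ℝ)) (b := -z)
        (fun t => |v + t| ^ p * t)
      simp only [neg_neg, neg_zero] at h3
      calc ∫ t in (0:ℝ)..(-z), |(-v) + t| ^ p * t
          = ∫ t in (0:ℝ)..(-z), -(|v + -t| ^ p * -t) := by
            congr 1; funext t
            rw [show v + -t = -((-v) + t) by ring, abs_neg]; ring
        _ = -∫ t in (0:ℝ)..(-z), |v + -t| ^ p * -t := intervalIntegral.integral_neg
        _ = -∫ t in z..(0:ℝ), |v + t| ^ p * t := by rw [h3]
        _ = ∫ t in (0:ℝ)..z, |v + t| ^ p * t := by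
            rw [intervalIntegral.integral_symm, neg_neg]
    rw [abs_neg, h2] at h
    have hzz : z ^ 2 = (-z) ^ 2 := by ring
    rw [abs_of_nonpos hz.le, hzz]
    exact h
  · simp
  · have h := core_pos p hp v z hz
    rwa [abs_of_pos hz]

/-- Upper bound (4.39)-type estimate for the primitive G of g under the
    dissipativity condition g'(s) ≥ -κ₁ + κ₂|s|^{q-1}. -/
theorem primitive_upper_bound
    (g : ℝ → ℝ) (κ₁ κ₂ q : ℝ)
    (hg : ContDiff ℝ 1 g) (hg0 : g 0 = 0)
    (hκ₁ : 0 < κ₁) (hκ₂ : 0 < κ₂) (hq : 3 ≤ q)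
    (hg' : ∀ s : ℝ, deriv g s ≥ -κ₁ + κ₂ * |s| ^ (q - 1))
    (G : ℝ → ℝ) (hG : ∀ s : ℝ, G s = ∫ τ in (0:ℝ)..s, g τ) :
    ∃ δ' > 0, ∀ v z : ℝ,
      G (v + z) - G v - g v * z - (g (v + z) - g v) * z ≤
        (κ₁ / 2) * |z| ^ 2 - δ' * |z| ^ 2 * (|v| ^ (q - 1) + |z| ^ (q - 1)) := by
  set p := q - 1 with hpdef
  have hp : 2 ≤ p := by simp only [hpdef]; linarith
  have hp0 : (0:ℝ) ≤ p := by linarith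
  have hcpos : (0:ℝ) < (2:ℝ) ^ (-(4*p+5)) := Real.rpow_pos_of_pos two_pos _
  refine ⟨κ₂ * 2 ^ (-(4*p+5)), by positivity, ?_⟩
  intro v z
  have hgc : Continuous g := hg.continuous
  have hg'c : Continuous (deriv g) := hg.continuous_deriv le_rfl
  have hgd : ∀ x : ℝ, HasDerivAt g (deriv g x) x :=
    fun x => ((hg.differentiable one_ne_zero) x).hasDerivAt
  have hGd : ∀ x : ℝ, HasDerivAt G (g x) x := by
    intro x
    have h1 : HasDerivAt (fun s => ∫ τ in (0:ℝ)..s, g τ) (g x) x :=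
      intervalIntegral.integral_hasDerivAt_right (hgc.intervalIntegrable _ _)
        hgc.aestronglyMeasurable.stronglyMeasurableAtFilter hgc.continuousAt
    have hGeq : G = fun s => ∫ τ in (0:ℝ)..s, g τ := funext hG
    rw [hGeq]; exact h1
  have hcont1 : Continuous fun t : ℝ => -(deriv g (v + t) * t) :=
    ((hg'c.comp (continuous_const.add continuous_id)).mul continuous_id).neg
  have key : G (v + z) - g (v + z) * z - G v = ∫ t in (0:ℝ)..z, -(deriv g (v + t) * t) := by
    have hφ : ∀ t ∈ Set.uIcc (0:ℝ) z, HasDerivAt (fun u => G (v + u) - g (v + u) * u)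
        (-(deriv g (v + t) * t)) t := by
      intro t _
      have h1 : HasDerivAt (fun u : ℝ => G (v + u)) (g (v + t)) t :=
        HasDerivAt.comp_const_add v t (hGd (v + t))
      have h2 : HasDerivAt (fun u : ℝ => g (v + u)) (deriv g (v + t)) t :=
        HasDerivAt.comp_const_add v t (hgd (v + t))
      have h3 : HasDerivAt (fun u : ℝ => g (v + u) * u)
          (deriv g (v + t) * t + g (v + t) * 1) t := h2.mul (hasDerivAt_id t)
      have h4 := h1.sub h3
      refine h4.congr_deriv ?_; ring
    have h5 := intervalIntegral.integral_eq_sub_of_hasDerivAt hφ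
      (hcont1.intervalIntegrable _ _)
    simp only [add_zero, mul_zero, sub_zero] at h5
    rw [h5]
  have hpw : ∀ s : ℝ, -(deriv g s) ≤ κ₁ - κ₂ * |s| ^ p := fun s => by
    have := hg' s; linarith
  have hcont2 : Continuous fun t : ℝ => (κ₁ - κ₂ * |v + t| ^ p) * t := by
    refine Continuous.mul ?_ continuous_id
    exact continuous_const.sub (continuous_const.mul
      ((continuous_abs.comp (continuous_const.add continuous_id)).rpow_const
        (fun _ => Or.inr hp0)))
  have hmono : ∫ t in (0:ℝ)..z, -(deriv g (v + t) * t)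
      ≤ ∫ t in (0:ℝ)..z, (κ₁ - κ₂ * |v + t| ^ p) * t := by
    rcases le_total 0 z with hz | hz
    · refine integral_mono_on hz (hcont1.intervalIntegrable _ _)
        (hcont2.intervalIntegrable _ _) ?_
      intro t ht
      have h1 := mul_le_mul_of_nonneg_right (hpw (v + t)) ht.1
      calc -(deriv g (v + t) * t) = -(deriv g (v + t)) * t := by ring
        _ ≤ (κ₁ - κ₂ * |v + t| ^ p) * t := h1
    · rw [intervalIntegral.integral_symm (a := z) (b := 0),
        intervalIntegral.integral_symm (a := z) (b := 0)]
      refine neg_le_neg ?_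
      refine integral_mono_on hz (hcont2.intervalIntegrable _ _)
        (hcont1.intervalIntegrable _ _) ?_
      intro t ht
      have h1 := mul_le_mul_of_nonpos_right (hpw (v + t)) ht.2
      calc (κ₁ - κ₂ * |v + t| ^ p) * t ≤ -(deriv g (v + t)) * t := h1
        _ = -(deriv g (v + t) * t) := by ring
  have hsplit : ∫ t in (0:ℝ)..z, (κ₁ - κ₂ * |v + t| ^ p) * t
      = κ₁ * (z ^ 2 / 2) - κ₂ * ∫ t in (0:ℝ)..z, |v + t| ^ p * t := by
    have e : (fun t : ℝ => (κ₁ - κ₂ * |v + t| ^ p) * t)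
        = fun t : ℝ => κ₁ * t - κ₂ * (|v + t| ^ p * t) := by funext t; ring
    rw [e, intervalIntegral.integral_sub
      ((by fun_prop : Continuous fun t : ℝ => κ₁ * t).intervalIntegrable _ _)
      ((show Continuous fun t : ℝ => κ₂ * (|v + t| ^ p * t) from continuous_const.mul (contF v p hp0)).intervalIntegrable _ _),
      intervalIntegral.integral_const_mul, intervalIntegral.integral_const_mul,
      integral_id]
    ring
  have hcore := core_all p hp v z
  have h6 : (κ₂ * 2 ^ (-(4*p+5))) * z ^ 2 * (|v| ^ p + |z| ^ p)
      ≤ κ₂ * ∫ t in (0:ℝ)..z, |v + t| ^ p * t := by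
    calc (κ₂ * 2 ^ (-(4*p+5))) * z ^ 2 * (|v| ^ p + |z| ^ p)
        = κ₂ * (2 ^ (-(4*p+5)) * z ^ 2 * (|v| ^ p + |z| ^ p)) := by ring
      _ ≤ _ := mul_le_mul_of_nonneg_left hcore hκ₂.le
  have hLHS : G (v + z) - G v - g v * z - (g (v + z) - g v) * z
      = G (v + z) - g (v + z) * z - G v := by ring
  rw [hLHS, key]
  have hz2 : |z| ^ 2 = z ^ 2 := sq_abs z
  rw [hz2]
  calc ∫ t in (0:ℝ)..z, -(deriv g (v + t) * t)
      ≤ ∫ t in (0:ℝ)..z, (κ₁ - κ₂ * |v + t| ^ p) * t := hmono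
    _ = κ₁ * (z ^ 2 / 2) - κ₂ * ∫ t in (0:ℝ)..z, |v + t| ^ p * t := hsplit
    _ ≤ κ₁ / 2 * z ^ 2 - κ₂ * 2 ^ (-(4*p+5)) * z ^ 2 * (|v| ^ p + |z| ^ p) := by
        linarith
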